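/- Let Δ̌ and η̌ be the fermionic Laplacian and its dual on the exterior algebra Λ in θ_1,...,θ_m,ϑ_1,...,ϑ_m. Suppose 0 ≤ r < s ≤ m+1, ℓ is an integer with 1 ≤ ℓ ≤ s−r−1, and f ∈ Λ satisfies Δ̌(f)=0, Σ_{p=1}^m θ_p∂_{θ_p}(f) = r·f and Σ_{p=1}^m ϑ_p∂_{ϑ_p}(f) = (m+1−s)·f. Then Δ̌(η̌^ℓ f) = ℓ(ℓ + r − s)·η̌^{ℓ−1} f. -/

import Mathlib

noncomputable section

/-- Exterior algebra on θ_1,...,θ_m,ϑ_1,...,ϑ_m -/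
abbrev ExtA (m : ℕ) := ExteriorAlgebra ℂ ((Fin m ⊕ Fin m) → ℂ)

variable (m : ℕ)

def θv (r : Fin m) : ExtA m := ExteriorAlgebra.ι ℂ (Pi.single (Sum.inl r) 1)
def ϑv (r : Fin m) : ExtA m := ExteriorAlgebra.ι ℂ (Pi.single (Sum.inr r) 1)

/-- the odd superderivation ∂_{θ_r} (left contraction with the dual vector) -/
def dθ (r : Fin m) : Module.End ℂ (ExtA m) :=
  CliffordAlgebra.contractLeft (Q := (0 : QuadraticForm ℂ ((Fin m ⊕ Fin m) → ℂ)))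
    (LinearMap.proj (Sum.inl r))
/-- the odd superderivation ∂_{ϑ_r} -/
def dϑ (r : Fin m) : Module.End ℂ (ExtA m) :=
  CliffordAlgebra.contractLeft (Q := (0 : QuadraticForm ℂ ((Fin m ⊕ Fin m) → ℂ)))
    (LinearMap.proj (Sum.inr r))

/-- Δ̌ = Σ_r ∂_{θ_r}∂_{ϑ_r} -/
def Δc : Module.End ℂ (ExtA m) := ∑ r : Fin m, dθ m r ∘ₗ dϑ m r
/-- η̌ = multiplication by Σ_r θ_r ϑ_r -/
def ηc : Module.End ℂ (ExtA m) := LinearMap.mulLeft ℂ (∑ r : Fin m, θv m r * ϑv m r)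

/-- θ-degree operator Σ_p θ_p∂_{θ_p} -/
def degθ : Module.End ℂ (ExtA m) := ∑ p : Fin m, LinearMap.mulLeft ℂ (θv m p) ∘ₗ dθ m p
/-- ϑ-degree operator Σ_p ϑ_p∂_{ϑ_p} -/
def degϑ : Module.End ℂ (ExtA m) := ∑ p : Fin m, LinearMap.mulLeft ℂ (ϑv m p) ∘ₗ dϑ m p

instance (m : ℕ) : Mul (Module.End ℂ (ExtA m)) := NonUnitalNonAssocRing.toMul
instance (m : ℕ) : Neg (Module.End ℂ (ExtA m)) := Ring.toNeg

-- abbreviations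
local notation "Mθ" => fun p => LinearMap.mulLeft ℂ (θv m p)
local notation "Mϑ" => fun p => LinearMap.mulLeft ℂ (ϑv m p)

lemma contract_mulLeft (φ : Module.Dual ℂ ((Fin m ⊕ Fin m) → ℂ)) (v : (Fin m ⊕ Fin m) → ℂ) :
    (CliffordAlgebra.contractLeft (Q := (0 : QuadraticForm ℂ ((Fin m ⊕ Fin m) → ℂ))) φ)
      * LinearMap.mulLeft ℂ (ExteriorAlgebra.ι ℂ v)
    = φ v • (1 : Module.End ℂ (ExtA m))
      - LinearMap.mulLeft ℂ (ExteriorAlgebra.ι ℂ v)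
        * CliffordAlgebra.contractLeft (Q := (0 : QuadraticForm ℂ ((Fin m ⊕ Fin m) → ℂ))) φ := by
  ext x
  simp [Module.End.mul_apply, LinearMap.mulLeft_apply, CliffordAlgebra.contractLeft_ι_mul]

lemma mulLeft_anticomm (v w : (Fin m ⊕ Fin m) → ℂ) :
    LinearMap.mulLeft ℂ (ExteriorAlgebra.ι ℂ v) * LinearMap.mulLeft ℂ (ExteriorAlgebra.ι ℂ w)
    = -(LinearMap.mulLeft ℂ (ExteriorAlgebra.ι ℂ w) * LinearMap.mulLeft ℂ (ExteriorAlgebra.ι ℂ v) : Module.End ℂ (ExtA m)) := by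
  ext x
  have := ExteriorAlgebra.ι_add_mul_swap (R := ℂ) v w
  simp [Module.End.mul_apply, LinearMap.mulLeft_apply, ← mul_assoc,
    eq_neg_of_add_eq_zero_left this]

lemma mulLeft_sq (v : (Fin m ⊕ Fin m) → ℂ) :
    LinearMap.mulLeft ℂ (ExteriorAlgebra.ι ℂ v) * LinearMap.mulLeft ℂ (ExteriorAlgebra.ι ℂ v)
    = (0 : Module.End ℂ (ExtA m)) := by
  ext x
  simp [Module.End.mul_apply, LinearMap.mulLeft_apply, ← mul_assoc, ExteriorAlgebra.ι_sq_zero]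

-- specialized anticommutation relations
lemma dθ_Mθ_diag (p : Fin m) : dθ m p * Mθ p = 1 - Mθ p * dθ m p := by
  have := contract_mulLeft m (LinearMap.proj (Sum.inl p)) (Pi.single (Sum.inl p) 1)
  simpa [dθ, θv] using this

lemma dθ_Mθ_off (p q : Fin m) (h : p ≠ q) : dθ m p * Mθ q = -(Mθ q * dθ m p) := by
  have := contract_mulLeft m (LinearMap.proj (Sum.inl p)) (Pi.single (Sum.inl q) 1)
  simpa [dθ, θv, Pi.single_apply, (Sum.inl_injective.ne_iff).mpr (Ne.symm h), neg_eq_iff_eq_neg,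
    sub_eq_iff_eq_add] using this

lemma dθ_Mϑ (p q : Fin m) : dθ m p * Mϑ q = -(Mϑ q * dθ m p) := by
  have := contract_mulLeft m (LinearMap.proj (Sum.inl p)) (Pi.single (Sum.inr q) 1)
  simpa [dθ, ϑv, Pi.single_apply] using this

lemma dϑ_Mϑ_diag (p : Fin m) : dϑ m p * Mϑ p = 1 - Mϑ p * dϑ m p := by
  have := contract_mulLeft m (LinearMap.proj (Sum.inr p)) (Pi.single (Sum.inr p) 1)
  simpa [dϑ, ϑv] using this

lemma dϑ_Mϑ_off (p q : Fin m) (h : p ≠ q) : dϑ m p * Mϑ q = -(Mϑ q * dϑ m p) := by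
  have := contract_mulLeft m (LinearMap.proj (Sum.inr p)) (Pi.single (Sum.inr q) 1)
  simpa [dϑ, ϑv, Pi.single_apply, (Sum.inr_injective.ne_iff).mpr (Ne.symm h)] using this

lemma dϑ_Mθ (p q : Fin m) : dϑ m p * Mθ q = -(Mθ q * dϑ m p) := by
  have := contract_mulLeft m (LinearMap.proj (Sum.inr p)) (Pi.single (Sum.inl q) 1)
  simpa [dϑ, θv, Pi.single_apply] using this

-- sum forms
lemma ηc_eq : ηc m = ∑ q : Fin m, Mθ q * Mϑ q := by
  rw [ηc]
  rw [show (∑ r : Fin m, θv m r * ϑv m r) = ∑ r : Fin m, θv m r * ϑv m r from rfl]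
  ext x
  simp [LinearMap.mulLeft_apply, Finset.sum_mul, LinearMap.sum_apply, Module.End.mul_apply,
    mul_assoc]

lemma Δc_eq : Δc m = ∑ p : Fin m, dθ m p * dϑ m p := rfl
lemma degθ_eq : degθ m = ∑ p : Fin m, Mθ p * dθ m p := rfl
lemma degϑ_eq : degϑ m = ∑ p : Fin m, Mϑ p * dϑ m p := rfl


lemma Mθ_Mθ (p q : Fin m) : Mθ p * Mθ q = -(Mθ q * Mθ p) := mulLeft_anticomm m _ _
lemma Mϑ_Mθ (p q : Fin m) : Mϑ p * Mθ q = -(Mθ q * Mϑ p) := mulLeft_anticomm m _ _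
lemma Mθ_Mϑ (p q : Fin m) : Mθ p * Mϑ q = -(Mϑ q * Mθ p) := mulLeft_anticomm m _ _
lemma Mϑ_Mϑ (p q : Fin m) : Mϑ p * Mϑ q = -(Mϑ q * Mϑ p) := mulLeft_anticomm m _ _
lemma Mθ_sq (p : Fin m) : Mθ p * Mθ p = 0 := mulLeft_sq m _
lemma Mϑ_sq (p : Fin m) : Mϑ p * Mϑ p = 0 := mulLeft_sq m _

-- key single-term lemmas
lemma keyΔ (p q : Fin m) :
    dθ m p * dϑ m p * (Mθ q * Mϑ q)
    = Mθ q * Mϑ q * (dθ m p * dϑ m p)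
      + (if p = q then Mϑ p * dϑ m p + Mθ p * dθ m p - 1 else 0) := by
  by_cases h : p = q
  · subst h
    simp only [eq_self_iff_true, if_true]
    have a1 := dϑ_Mθ m p p
    have a2 := dϑ_Mϑ_diag m p
    have a3 := dθ_Mθ_diag m p
    have a4 := dθ_Mϑ m p p
    calc dθ m p * dϑ m p * (Mθ p * Mϑ p)
        = dθ m p * (dϑ m p * Mθ p) * Mϑ p := by noncomm_ring
      _ = -((dθ m p * Mθ p) * (dϑ m p * Mϑ p)) := by rw [a1]; noncomm_ring
      _ = -((1 - Mθ p * dθ m p) * (1 - Mϑ p * dϑ m p)) := by rw [a2, a3]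
      _ = -1 + Mϑ p * dϑ m p + Mθ p * dθ m p - Mθ p * (dθ m p * Mϑ p) * dϑ m p := by
          noncomm_ring
      _ = -1 + Mϑ p * dϑ m p + Mθ p * dθ m p + Mθ p * Mϑ p * (dθ m p * dϑ m p) := by
          rw [a4]; noncomm_ring
      _ = _ := by noncomm_ring
  · simp only [if_neg h, add_zero]
    have a1 := dϑ_Mθ m p q
    have a2 := dϑ_Mϑ_off m p q h
    have a3 := dθ_Mθ_off m p q h
    have a4 := dθ_Mϑ m p q
    calc dθ m p * dϑ m p * (Mθ q * Mϑ q)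
        = dθ m p * (dϑ m p * Mθ q) * Mϑ q := by noncomm_ring
      _ = -((dθ m p * Mθ q) * (dϑ m p * Mϑ q)) := by rw [a1]; noncomm_ring
      _ = -(-(Mθ q * dθ m p) * -(Mϑ q * dϑ m p)) := by rw [a2, a3]
      _ = -(Mθ q * (dθ m p * Mϑ q) * dϑ m p) := by noncomm_ring
      _ = _ := by rw [a4]; noncomm_ring

lemma keyθ (p q : Fin m) :
    Mθ p * dθ m p * (Mθ q * Mϑ q)
    = Mθ q * Mϑ q * (Mθ p * dθ m p) + (if p = q then Mθ p * Mϑ p else 0) := by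
  by_cases h : p = q
  · subst h
    simp only [if_pos rfl]
    have a3 := dθ_Mθ_diag m p
    have hsq := Mθ_sq m p
    have hba := Mϑ_Mθ m p p
    have h2 : Mθ p * Mϑ p * (Mθ p * dθ m p) = 0 := by
      calc Mθ p * Mϑ p * (Mθ p * dθ m p)
          = Mθ p * (Mϑ p * Mθ p) * dθ m p := by noncomm_ring
        _ = -(Mθ p * Mθ p * (Mϑ p * dθ m p)) := by rw [hba]; noncomm_ring
        _ = 0 := by rw [hsq]; noncomm_ring
    rw [h2, zero_add]
    calc Mθ p * dθ m p * (Mθ p * Mϑ p)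
        = Mθ p * (dθ m p * Mθ p) * Mϑ p := by noncomm_ring
      _ = Mθ p * (1 - Mθ p * dθ m p) * Mϑ p := by rw [a3]
      _ = Mθ p * Mϑ p - Mθ p * Mθ p * (dθ m p * Mϑ p) := by noncomm_ring
      _ = Mθ p * Mϑ p := by rw [hsq]; noncomm_ring
  · simp only [if_neg h, add_zero]
    have a3 := dθ_Mθ_off m p q h
    have a4 := dθ_Mϑ m p q
    have b1 := Mθ_Mθ m p q
    have b2 := Mθ_Mϑ m p q
    calc Mθ p * dθ m p * (Mθ q * Mϑ q)
        = Mθ p * (dθ m p * Mθ q) * Mϑ q := by noncomm_ring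
      _ = -(Mθ p * Mθ q * (dθ m p * Mϑ q)) := by rw [a3]; noncomm_ring
      _ = Mθ p * Mθ q * (Mϑ q * dθ m p) := by rw [a4]; noncomm_ring
      _ = -(Mθ q * (Mθ p * Mϑ q) * dθ m p) := by rw [b1]; noncomm_ring
      _ = Mθ q * Mϑ q * (Mθ p * dθ m p) := by rw [b2]; noncomm_ring

lemma keyϑ (p q : Fin m) :
    Mϑ p * dϑ m p * (Mθ q * Mϑ q)
    = Mθ q * Mϑ q * (Mϑ p * dϑ m p) + (if p = q then Mθ p * Mϑ p else 0) := by
  by_cases h : p = q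
  · subst h
    simp only [if_pos rfl]
    have a1 := dϑ_Mθ m p p
    have a2 := dϑ_Mϑ_diag m p
    have hsq := Mϑ_sq m p
    have hba := Mϑ_Mθ m p p
    have h2 : Mθ p * Mϑ p * (Mϑ p * dϑ m p) = 0 := by
      calc Mθ p * Mϑ p * (Mϑ p * dϑ m p)
          = Mθ p * (Mϑ p * Mϑ p) * dϑ m p := by noncomm_ring
        _ = 0 := by rw [hsq]; noncomm_ring
    rw [h2, zero_add]
    calc Mϑ p * dϑ m p * (Mθ p * Mϑ p)
        = Mϑ p * (dϑ m p * Mθ p) * Mϑ p := by noncomm_ring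
      _ = -(Mϑ p * Mθ p * (dϑ m p * Mϑ p)) := by rw [a1]; noncomm_ring
      _ = -(Mϑ p * Mθ p * (1 - Mϑ p * dϑ m p)) := by rw [a2]
      _ = -(Mϑ p * Mθ p) + Mϑ p * Mθ p * (Mϑ p * dϑ m p) := by noncomm_ring
      _ = Mθ p * Mϑ p + -(Mθ p * Mϑ p) * (Mϑ p * dϑ m p) := by rw [hba]; noncomm_ring
      _ = Mθ p * Mϑ p - Mθ p * (Mϑ p * Mϑ p) * dϑ m p := by noncomm_ring
      _ = Mθ p * Mϑ p := by rw [hsq]; noncomm_ring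
  · simp only [if_neg h, add_zero]
    have a1 := dϑ_Mθ m p q
    have a2 := dϑ_Mϑ_off m p q h
    have b1 := Mϑ_Mθ m p q
    have b2 := Mϑ_Mϑ m p q
    calc Mϑ p * dϑ m p * (Mθ q * Mϑ q)
        = Mϑ p * (dϑ m p * Mθ q) * Mϑ q := by noncomm_ring
      _ = -(Mϑ p * Mθ q * (dϑ m p * Mϑ q)) := by rw [a1]; noncomm_ring
      _ = Mϑ p * Mθ q * (Mϑ q * dϑ m p) := by rw [a2]; noncomm_ring
      _ = -(Mθ q * (Mϑ p * Mϑ q) * dϑ m p) := by rw [b1]; noncomm_ring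
      _ = Mθ q * Mϑ q * (Mϑ p * dϑ m p) := by rw [b2]; noncomm_ring

lemma comm_Δη : Δc m * ηc m = ηc m * Δc m + degθ m + degϑ m - (m : ℂ) • 1 := by
  have h0 : Δc m * ηc m
      = ∑ p : Fin m, ∑ q : Fin m, dθ m p * dϑ m p * (Mθ q * Mϑ q) := by
    rw [Δc_eq, ηc_eq, Finset.sum_mul]
    exact Finset.sum_congr rfl fun p _ => Finset.mul_sum _ _ _
  have h1 : (∑ p : Fin m, ∑ q : Fin m, Mθ q * Mϑ q * (dθ m p * dϑ m p))
      = ηc m * Δc m := by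
    rw [Finset.sum_comm, ηc_eq, Δc_eq, Finset.sum_mul]
    exact Finset.sum_congr rfl fun q _ => (Finset.mul_sum _ _ _).symm
  have h2 : (∑ p : Fin m, ∑ q : Fin m,
        (if p = q then Mϑ p * dϑ m p + Mθ p * dθ m p - 1 else 0))
      = degϑ m + degθ m - (m : ℂ) • 1 := by
    simp only [Finset.sum_ite_eq, Finset.mem_univ, if_pos]
    rw [Finset.sum_sub_distrib, Finset.sum_add_distrib, ← degϑ_eq, ← degθ_eq]
    rw [Finset.sum_const, Finset.card_univ, Fintype.card_fin, Nat.cast_smul_eq_nsmul ℂ]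
  calc Δc m * ηc m
      = ∑ p : Fin m, ∑ q : Fin m, (Mθ q * Mϑ q * (dθ m p * dϑ m p)
          + (if p = q then Mϑ p * dϑ m p + Mθ p * dθ m p - 1 else 0)) := by
        rw [h0]; simp_rw [keyΔ]
    _ = (∑ p : Fin m, ∑ q : Fin m, Mθ q * Mϑ q * (dθ m p * dϑ m p))
          + ∑ p : Fin m, ∑ q : Fin m,
            (if p = q then Mϑ p * dϑ m p + Mθ p * dθ m p - 1 else 0) := by
        simp only [Finset.sum_add_distrib]
    _ = ηc m * Δc m + (degϑ m + degθ m - (m : ℂ) • 1) := by rw [h1, h2]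
    _ = _ := by abel

lemma comm_θη : degθ m * ηc m = ηc m * degθ m + ηc m := by
  have h0 : degθ m * ηc m
      = ∑ p : Fin m, ∑ q : Fin m, Mθ p * dθ m p * (Mθ q * Mϑ q) := by
    rw [degθ_eq, ηc_eq, Finset.sum_mul]
    exact Finset.sum_congr rfl fun p _ => Finset.mul_sum _ _ _
  have h1 : (∑ p : Fin m, ∑ q : Fin m, Mθ q * Mϑ q * (Mθ p * dθ m p))
      = ηc m * degθ m := by
    rw [Finset.sum_comm, ηc_eq, degθ_eq, Finset.sum_mul]
    exact Finset.sum_congr rfl fun q _ => (Finset.mul_sum _ _ _).symm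
  have h2 : (∑ p : Fin m, ∑ q : Fin m, (if p = q then Mθ p * Mϑ p else 0)) = ηc m := by
    simp only [Finset.sum_ite_eq, Finset.mem_univ, if_pos]
    rw [ηc_eq]
  calc degθ m * ηc m
      = ∑ p : Fin m, ∑ q : Fin m, (Mθ q * Mϑ q * (Mθ p * dθ m p)
          + (if p = q then Mθ p * Mϑ p else 0)) := by
        rw [h0]; simp_rw [keyθ]
    _ = (∑ p : Fin m, ∑ q : Fin m, Mθ q * Mϑ q * (Mθ p * dθ m p))
          + ∑ p : Fin m, ∑ q : Fin m, (if p = q then Mθ p * Mϑ p else 0) := by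
        simp only [Finset.sum_add_distrib]
    _ = _ := by rw [h1, h2]

lemma comm_ϑη : degϑ m * ηc m = ηc m * degϑ m + ηc m := by
  have h0 : degϑ m * ηc m
      = ∑ p : Fin m, ∑ q : Fin m, Mϑ p * dϑ m p * (Mθ q * Mϑ q) := by
    rw [degϑ_eq, ηc_eq, Finset.sum_mul]
    exact Finset.sum_congr rfl fun p _ => Finset.mul_sum _ _ _
  have h1 : (∑ p : Fin m, ∑ q : Fin m, Mθ q * Mϑ q * (Mϑ p * dϑ m p))
      = ηc m * degϑ m := by
    rw [Finset.sum_comm, ηc_eq, degϑ_eq, Finset.sum_mul]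
    exact Finset.sum_congr rfl fun q _ => (Finset.mul_sum _ _ _).symm
  have h2 : (∑ p : Fin m, ∑ q : Fin m, (if p = q then Mθ p * Mϑ p else 0)) = ηc m := by
    simp only [Finset.sum_ite_eq, Finset.mem_univ, if_pos]
    rw [ηc_eq]
  calc degϑ m * ηc m
      = ∑ p : Fin m, ∑ q : Fin m, (Mθ q * Mϑ q * (Mϑ p * dϑ m p)
          + (if p = q then Mθ p * Mϑ p else 0)) := by
        rw [h0]; simp_rw [keyϑ]
    _ = (∑ p : Fin m, ∑ q : Fin m, Mθ q * Mϑ q * (Mϑ p * dϑ m p))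
          + ∑ p : Fin m, ∑ q : Fin m, (if p = q then Mθ p * Mϑ p else 0) := by
        simp only [Finset.sum_add_distrib]
    _ = _ := by rw [h1, h2]

lemma degθ_pow (f : ExtA m) (a : ℂ) (h : degθ m f = a • f) (k : ℕ) :
    degθ m ((ηc m ^ k) f) = (a + k) • (ηc m ^ k) f := by
  induction k with
  | zero => simpa using h
  | succ k ih =>
    have hc := LinearMap.congr_fun (comm_θη m) ((ηc m ^ k) f)
    simp only [Module.End.mul_apply, LinearMap.add_apply] at hc
    rw [pow_succ', Module.End.mul_apply, hc, ih, map_smul]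
    rw [show (a + ((k : ℕ) + 1 : ℕ) : ℂ) = (a + k) + 1 by push_cast; ring]
    rw [add_smul, add_smul, one_smul, add_smul]

lemma degϑ_pow (f : ExtA m) (b : ℂ) (h : degϑ m f = b • f) (k : ℕ) :
    degϑ m ((ηc m ^ k) f) = (b + k) • (ηc m ^ k) f := by
  induction k with
  | zero => simpa using h
  | succ k ih =>
    have hc := LinearMap.congr_fun (comm_ϑη m) ((ηc m ^ k) f)
    simp only [Module.End.mul_apply, LinearMap.add_apply] at hc
    rw [pow_succ', Module.End.mul_apply, hc, ih, map_smul]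
    rw [show (b + ((k : ℕ) + 1 : ℕ) : ℂ) = (b + k) + 1 by push_cast; ring]
    rw [add_smul, add_smul, one_smul, add_smul]

lemma Δ_pow (f : ExtA m) (a b : ℂ) (hf : Δc m f = 0)
    (ha : degθ m f = a • f) (hb : degϑ m f = b • f) (k : ℕ) :
    Δc m ((ηc m ^ (k + 1)) f)
      = (((k : ℂ) + 1) * (a + b - m + (k : ℂ))) • (ηc m ^ k) f := by
  induction k with
  | zero =>
    have hc := LinearMap.congr_fun (comm_Δη m) f
    simp only [Module.End.mul_apply, LinearMap.add_apply, LinearMap.sub_apply,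
      LinearMap.smul_apply, Module.End.one_apply] at hc
    rw [pow_one, hc, hf, map_zero, zero_add, ha, hb]
    simp only [pow_zero, Module.End.one_apply, Nat.cast_zero]
    rw [← add_smul, ← sub_smul]
    ring_nf
  | succ k ih =>
    have hc := LinearMap.congr_fun (comm_Δη m) ((ηc m ^ (k + 1)) f)
    simp only [Module.End.mul_apply, LinearMap.add_apply, LinearMap.sub_apply,
      LinearMap.smul_apply, Module.End.one_apply] at hc
    rw [pow_succ', Module.End.mul_apply, hc, ih, map_smul,
      degθ_pow m f a ha (k + 1), degϑ_pow m f b hb (k + 1)]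
    rw [show ηc m ((ηc m ^ k) f) = (ηc m ^ (k + 1)) f by rw [pow_succ', Module.End.mul_apply]]
    rw [← add_smul, ← add_smul, ← sub_smul]
    congr 1
    push_cast
    ring

theorem delta_eta_pow_fermionic (r s ℓ : ℕ) (hrs : r < s) (hs : s ≤ m + 1)
    (hℓ₁ : 1 ≤ ℓ) (hℓ₂ : ℓ ≤ s - r - 1) (f : ExtA m)
    (hf : Δc m f = 0) (hθ : degθ m f = (r : ℂ) • f)
    (hϑ : degϑ m f = ((m + 1 - s : ℕ) : ℂ) • f) :
    Δc m ((ηc m ^ ℓ) f)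
      = ((ℓ : ℂ) * ((ℓ : ℂ) + r - s)) • (ηc m ^ (ℓ - 1)) f := by
  obtain ⟨k, rfl⟩ : ∃ k, ℓ = k + 1 := ⟨ℓ - 1, (Nat.succ_pred_eq_of_pos hℓ₁).symm⟩
  have hb : degϑ m f = ((m : ℂ) + 1 - s) • f := by
    rw [hϑ, Nat.cast_sub hs]; push_cast; ring_nf
  have key := Δ_pow m f (r : ℂ) ((m : ℂ) + 1 - s) hf hθ hb k
  rw [Nat.add_sub_cancel, key]
  congr 1
  push_cast
  ring
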